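/- Let A, B be n×n positive definite complex matrices, X an n×n complex matrix, p ∈ [0,1], and |||·||| a unitarily invariant norm on n×n complex matrices. Then |||A^{1/2} X B^{1/2}|||² ≤ |||A^p X B^{1−p}||| · |||A^{1−p} X B^p|||. -/

import Mathlib

open scoped Matrix ComplexOrder

open Complex Matrix Finset

namespace Stmt5Aux

variable {d : ℕ}

/-- conjugation of a diagonal matrix by `U`. -/
noncomputable def cds (U : Matrix (Fin d) (Fin d) ℂ) (c : Fin d → ℂ) :
    Matrix (Fin d) (Fin d) ℂ := U * Matrix.diagonal c * star U

lemma cds_mul {U : Matrix (Fin d) (Fin d) ℂ} (hU : U ∈ Matrix.unitaryGroup (Fin d) ℂ)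
    (c e : Fin d → ℂ) : cds U c * cds U e = cds U (c * e) := by
  have h : star U * U = 1 := Matrix.mem_unitaryGroup_iff'.mp hU
  unfold cds
  have h2 : U * Matrix.diagonal c * star U * (U * Matrix.diagonal e * star U)
      = U * (Matrix.diagonal c * (star U * U) * Matrix.diagonal e) * star U := by
    noncomm_ring
  rw [h2, h, mul_one, Matrix.diagonal_mul_diagonal]
  rfl

lemma cds_star (U : Matrix (Fin d) (Fin d) ℂ) (c : Fin d → ℂ) :
    star (cds U c) = cds U (star c) := by
  simp only [cds, StarMul.star_mul, star_star, Matrix.star_eq_conjTranspose,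
    Matrix.diagonal_conjTranspose, mul_assoc, Matrix.conjTranspose_conjTranspose]

lemma cds_unitary {U : Matrix (Fin d) (Fin d) ℂ} (hU : U ∈ Matrix.unitaryGroup (Fin d) ℂ)
    {c : Fin d → ℂ} (hc : ∀ i, star (c i) * c i = 1) :
    cds U c ∈ Matrix.unitaryGroup (Fin d) ℂ := by
  refine Matrix.mem_unitaryGroup_iff'.mpr ?_
  rw [cds_star, cds_mul hU]
  have hcc : Matrix.diagonal (star c * c) = (1 : Matrix (Fin d) (Fin d) ℂ) := by
    rw [show star c * c = fun _ => (1 : ℂ) from funext fun i => hc i, Matrix.diagonal_one]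
  unfold cds
  rw [hcc, mul_one]
  exact Matrix.mem_unitaryGroup_iff.mp hU

lemma diagonal_eq_sum (c : Fin d → ℂ) :
    Matrix.diagonal c = ∑ i, c i • Matrix.single i i (1 : ℂ) := by
  ext a b
  simp only [Matrix.sum_apply, Matrix.smul_apply, Matrix.single, Matrix.of_apply,
    smul_eq_mul, mul_ite, mul_one, mul_zero, Matrix.diagonal_apply]
  by_cases h : a = b
  · subst h; simp
  · rw [if_neg h]
    refine (Finset.sum_eq_zero fun x _ => ?_).symm
    rw [if_neg]
    rintro ⟨rfl, rfl⟩
    exact h rfl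

lemma cds_eq_sum (U : Matrix (Fin d) (Fin d) ℂ) (c : Fin d → ℂ) :
    cds U c = ∑ i, c i • (U * Matrix.single i i (1 : ℂ) * star U) := by
  rw [cds, diagonal_eq_sum, Matrix.mul_sum, Matrix.sum_mul]
  congr 1
  funext i
  rw [← Matrix.smul_mul, ← Matrix.mul_smul, Matrix.smul_single, smul_eq_mul, mul_one]

lemma sum_smul_mul (c e : Fin d → ℂ) (M P : Fin d → Matrix (Fin d) (Fin d) ℂ)
    (X : Matrix (Fin d) (Fin d) ℂ) :
    (∑ i, c i • M i) * X * (∑ j, e j • P j)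
      = ∑ i, ∑ j, (c i * e j) • (M i * X * P j) := by
  rw [Matrix.sum_mul, Matrix.sum_mul]
  congr 1
  funext i
  rw [Matrix.mul_sum]
  congr 1
  funext j
  simp [Matrix.smul_mul, Matrix.mul_smul, smul_smul, mul_comm]

/-- matrix power function along the spectral decomposition -/
noncomputable def pw (U : Matrix (Fin d) (Fin d) ℂ) (la : Fin d → ℝ) (z : ℂ) :
    Matrix (Fin d) (Fin d) ℂ :=
  cds U (fun i => Complex.exp (z * (la i : ℂ)))

lemma pw_add {U : Matrix (Fin d) (Fin d) ℂ} (hU : U ∈ Matrix.unitaryGroup (Fin d) ℂ)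
    (la : Fin d → ℝ) (z w : ℂ) : pw U la (z + w) = pw U la z * pw U la w := by
  rw [pw, pw, pw, cds_mul hU]
  have hfun : (fun i => Complex.exp ((z + w) * (la i : ℂ)))
      = (fun i => Complex.exp (z * (la i : ℂ))) * (fun i => Complex.exp (w * (la i : ℂ))) :=
    funext fun i => by rw [Pi.mul_apply, add_mul, Complex.exp_add]
  rw [hfun]

lemma pw_unitary {U : Matrix (Fin d) (Fin d) ℂ} (hU : U ∈ Matrix.unitaryGroup (Fin d) ℂ)
    (la : Fin d → ℝ) (s : ℝ) : pw U la ((s : ℂ) * I) ∈ Matrix.unitaryGroup (Fin d) ℂ := by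
  refine cds_unitary hU fun i => ?_
  have h1 : star (Complex.exp ((s : ℂ) * I * (la i : ℂ)))
      = Complex.exp (-((s : ℂ) * I * (la i : ℂ))) := by
    rw [Complex.star_def, ← Complex.exp_conj]
    congr 1
    simp [Complex.conj_I, Complex.conj_ofReal]
  rw [h1, ← Complex.exp_add, neg_add_cancel, Complex.exp_zero]

lemma pw_decomp {U : Matrix (Fin d) (Fin d) ℂ} (hU : U ∈ Matrix.unitaryGroup (Fin d) ℂ)
    (la : Fin d → ℝ) (w : ℂ) :
    pw U la w = pw U la ((w.im : ℂ) * I) * pw U la (w.re : ℂ) := by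
  conv_lhs => rw [show w = ((w.im : ℂ) * I + (w.re : ℂ)) by
    rw [add_comm]; exact (Complex.re_add_im w).symm]
  exact pw_add hU la _ _

lemma pw_sum (U : Matrix (Fin d) (Fin d) ℂ) (la : Fin d → ℝ) (z : ℂ) :
    pw U la z = ∑ i, Complex.exp (z * (la i : ℂ)) •
      (U * Matrix.single i i (1 : ℂ) * star U) :=
  cds_eq_sum U _

/-- the power function attached to a positive definite matrix -/
noncomputable def pwA {A : Matrix (Fin d) (Fin d) ℂ} (hA : A.PosDef) (z : ℂ) :
    Matrix (Fin d) (Fin d) ℂ :=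
  pw (hA.1.eigenvectorUnitary : Matrix (Fin d) (Fin d) ℂ)
    (fun i => Real.log (hA.1.eigenvalues i)) z

lemma pwA_real {A : Matrix (Fin d) (Fin d) ℂ} (hA : A.PosDef) (t : ℝ) :
    pwA hA (t : ℂ) = cfc (fun x : ℝ => x ^ t) A := by
  rw [hA.1.cfc_eq]
  unfold pwA pw cds Matrix.IsHermitian.cfc
  have hfun : (fun i => Complex.exp ((t : ℂ) * ((Real.log (hA.1.eigenvalues i) : ℝ) : ℂ)))
      = (RCLike.ofReal ∘ (fun x : ℝ => x ^ t) ∘ hA.1.eigenvalues : Fin d → ℂ) := by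
    funext i
    show Complex.exp ((t : ℂ) * ((Real.log (hA.1.eigenvalues i) : ℝ) : ℂ))
        = RCLike.ofReal ((hA.1.eigenvalues i) ^ t)
    rw [Real.rpow_def_of_pos (hA.eigenvalues_pos i),
      show ((t : ℂ) * ((Real.log (hA.1.eigenvalues i) : ℝ) : ℂ))
        = ((Real.log (hA.1.eigenvalues i) * t : ℝ) : ℂ) by push_cast; ring,
      ← Complex.ofReal_exp]
    rfl
  rw [hfun]
  rfl

end Stmt5Aux
open Complex.HadamardThreeLines in
/-- **Inequality (3.2).** For positive definite `n × n` complex matrices `A, B`, any `n × n`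
matrix `X`, `p ∈ [0,1]`, and any unitarily invariant norm `N`:
`N(A^{1/2} X B^{1/2})² ≤ N(A^p X B^{1-p}) * N(A^{1-p} X B^p)`. -/
theorem stmt_5 {d : ℕ} (A B X : Matrix (Fin d) (Fin d) ℂ)
    (hA : A.PosDef) (hB : B.PosDef)
    (p : ℝ) (hp0 : 0 ≤ p) (hp1 : p ≤ 1)
    (N : Matrix (Fin d) (Fin d) ℂ → ℝ)
    (hN_add : ∀ C D, N (C + D) ≤ N C + N D)
    (hN_smul : ∀ (c : ℂ) C, N (c • C) = ‖c‖ * N C)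
    (hN_pos : ∀ C, C ≠ 0 → 0 < N C)
    (hN_unitary : ∀ U V C, U ∈ Matrix.unitaryGroup (Fin d) ℂ →
      V ∈ Matrix.unitaryGroup (Fin d) ℂ → N (U * C * V) = N C) :
    N (cfc (fun x : ℝ => x ^ ((1 : ℝ) / 2)) A * X * cfc (fun x : ℝ => x ^ ((1 : ℝ) / 2)) B) ^ 2 ≤
      N (cfc (fun x : ℝ => x ^ p) A * X * cfc (fun x : ℝ => x ^ (1 - p)) B) *
        N (cfc (fun x : ℝ => x ^ (1 - p)) A * X * cfc (fun x : ℝ => x ^ p) B) := by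
  classical
  letI : NormedAddCommGroup (Matrix (Fin d) (Fin d) ℂ) :=
    AddGroupNorm.toNormedAddCommGroup
      { toFun := N
        map_zero' := by have h := hN_smul 0 0; simpa using h
        add_le' := hN_add
        neg' := fun x => by have h := hN_smul (-1) x; simpa using h
        eq_zero_of_map_eq_zero' := fun x hx => by
          by_contra h; exact (hN_pos x h).ne' hx }
  letI : NormedSpace ℂ (Matrix (Fin d) (Fin d) ℂ) := ⟨fun c x => (hN_smul c x).le⟩
  have hnorm : ∀ M : Matrix (Fin d) (Fin d) ℂ, ‖M‖ = N M := fun _ => rfl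
  have hUAmem : ((hA.1.eigenvectorUnitary : Matrix (Fin d) (Fin d) ℂ))
      ∈ Matrix.unitaryGroup (Fin d) ℂ := SetLike.coe_mem _
  have hUBmem : ((hB.1.eigenvectorUnitary : Matrix (Fin d) (Fin d) ℂ))
      ∈ Matrix.unitaryGroup (Fin d) ℂ := SetLike.coe_mem _
  set F : ℂ → Matrix (Fin d) (Fin d) ℂ :=
    fun w => Stmt5Aux.pwA hA w * X * Stmt5Aux.pwA hB (1 - w) with hF
  set f : ℂ → Matrix (Fin d) (Fin d) ℂ := fun z => F ((p : ℂ) + ((1 - 2*p : ℝ) : ℂ) * z) with hf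
  -- differentiability
  set CC : Fin d → Fin d → Matrix (Fin d) (Fin d) ℂ := fun i j =>
      (((hA.1.eigenvectorUnitary : Matrix (Fin d) (Fin d) ℂ) *
          Matrix.single i i (1 : ℂ) *
          star (hA.1.eigenvectorUnitary : Matrix (Fin d) (Fin d) ℂ)) * X *
       ((hB.1.eigenvectorUnitary : Matrix (Fin d) (Fin d) ℂ) *
          Matrix.single j j (1 : ℂ) *
          star (hB.1.eigenvectorUnitary : Matrix (Fin d) (Fin d) ℂ))) with hCC
  have hFsum : F = fun w => ∑ i, ∑ j,
      (Complex.exp (w * (Real.log (hA.1.eigenvalues i) : ℂ)) *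
        Complex.exp ((1 - w) * (Real.log (hB.1.eigenvalues j) : ℂ))) • CC i j := by
    funext w
    show Stmt5Aux.pwA hA w * X * Stmt5Aux.pwA hB (1 - w) = _
    unfold Stmt5Aux.pwA
    rw [Stmt5Aux.pw_sum, Stmt5Aux.pw_sum, Stmt5Aux.sum_smul_mul]
  have hFdiff : @Differentiable ℂ _ ℂ _ _ _ (Matrix (Fin d) (Fin d) ℂ) NormedAddCommGroup.toAddCommGroup NormedSpace.toModule PseudoMetricSpace.toUniformSpace.toTopologicalSpace F := by
    rw [hFsum]
    refine Differentiable.fun_sum fun i _ => ?_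
    refine Differentiable.fun_sum fun j _ => ?_
    exact (((differentiable_id.mul_const _).cexp).mul
      (((differentiable_const (1:ℂ)).sub differentiable_id).mul_const _).cexp).smul_const _
  have hfdiff : @Differentiable ℂ _ ℂ _ _ _ (Matrix (Fin d) (Fin d) ℂ) NormedAddCommGroup.toAddCommGroup NormedSpace.toModule PseudoMetricSpace.toUniformSpace.toTopologicalSpace f := by
    rw [hf]
    exact hFdiff.comp ((differentiable_const _).add
      ((differentiable_const ((1 - 2*p : ℝ) : ℂ)).mul differentiable_id))
  have hd : DiffContOnCl ℂ f (verticalStrip 0 1) := hfdiff.diffContOnCl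
  -- norm on vertical lines
  have hline : ∀ w : ℂ,
      ‖F w‖ = N (Stmt5Aux.pwA hA (w.re : ℂ) * X * Stmt5Aux.pwA hB ((1 - w.re : ℝ) : ℂ)) := by
    intro w
    rw [hnorm]
    show N (Stmt5Aux.pwA hA w * X * Stmt5Aux.pwA hB (1 - w)) = _
    have e1 : Stmt5Aux.pwA hA w * X * Stmt5Aux.pwA hB (1 - w)
        = Stmt5Aux.pwA hA ((w.im : ℂ) * Complex.I) *
          (Stmt5Aux.pwA hA (w.re : ℂ) * X * Stmt5Aux.pwA hB ((1 - w.re : ℝ) : ℂ)) *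
          Stmt5Aux.pwA hB (((-w.im : ℝ) : ℂ) * Complex.I) := by
      unfold Stmt5Aux.pwA
      rw [Stmt5Aux.pw_decomp hUAmem _ w,
        show (1 : ℂ) - w = ((1 - w.re : ℝ) : ℂ) + ((-w.im : ℝ) : ℂ) * Complex.I by
          apply Complex.ext <;> simp,
        Stmt5Aux.pw_add hUBmem]
      noncomm_ring
    rw [e1]
    exact hN_unitary _ _ _ (Stmt5Aux.pw_unitary hUAmem _ w.im)
      (Stmt5Aux.pw_unitary hUBmem _ (-w.im))
  -- real part of the reparametrization
  have hre : ∀ z : ℂ, ((p : ℂ) + ((1 - 2*p : ℝ) : ℂ) * z).re = p + (1 - 2*p) * z.re := by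
    intro z
    simp
  -- boundedness on the strip
  have hbound : ∀ t ∈ Set.Icc (0:ℝ) 1, ‖F ((t : ℝ) : ℂ)‖ ≤
      ∑ i, ∑ j, Real.exp |Real.log (hA.1.eigenvalues i)| *
        Real.exp |Real.log (hB.1.eigenvalues j)| * ‖CC i j‖ := by
    intro t ht
    simp only [hFsum]
    refine (norm_sum_le _ _).trans ?_
    refine Finset.sum_le_sum fun i _ => ?_
    refine (norm_sum_le _ _).trans ?_
    refine Finset.sum_le_sum fun j _ => ?_
    rw [norm_smul]
    refine mul_le_mul_of_nonneg_right ?_ (norm_nonneg _)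
    rw [norm_mul, Complex.norm_exp, Complex.norm_exp,
      show (((t:ℝ):ℂ) * ((Real.log (hA.1.eigenvalues i) : ℝ) : ℂ)).re
        = t * Real.log (hA.1.eigenvalues i) by simp,
      show ((1 - ((t:ℝ):ℂ)) * ((Real.log (hB.1.eigenvalues j) : ℝ) : ℂ)).re
        = (1 - t) * Real.log (hB.1.eigenvalues j) by
        rw [show (1 : ℂ) - ((t:ℝ):ℂ) = (((1 - t : ℝ) : ℝ) : ℂ) by push_cast; ring]
        simp]
    have h1 : t * Real.log (hA.1.eigenvalues i) ≤ |Real.log (hA.1.eigenvalues i)| := by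
      nlinarith [le_abs_self (Real.log (hA.1.eigenvalues i)),
        neg_abs_le (Real.log (hA.1.eigenvalues i)), ht.1, ht.2]
    have h2 : (1 - t) * Real.log (hB.1.eigenvalues j) ≤ |Real.log (hB.1.eigenvalues j)| := by
      nlinarith [le_abs_self (Real.log (hB.1.eigenvalues j)),
        neg_abs_le (Real.log (hB.1.eigenvalues j)), ht.1, ht.2]
    exact mul_le_mul (Real.exp_le_exp.2 h1) (Real.exp_le_exp.2 h2)
      (Real.exp_pos _).le (Real.exp_pos _).le
  have hFre : ∀ w : ℂ, ‖F w‖ = ‖F ((w.re : ℝ) : ℂ)‖ := by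
    intro w
    rw [hline w, hline ((w.re : ℝ) : ℂ)]
    simp
  have hBdd : BddAbove ((norm ∘ f) '' verticalClosedStrip 0 1) := by
    refine ⟨∑ i, ∑ j, Real.exp |Real.log (hA.1.eigenvalues i)| *
        Real.exp |Real.log (hB.1.eigenvalues j)| * ‖CC i j‖, ?_⟩
    rintro y ⟨z, hz, rfl⟩
    have hz' : z.re ∈ Set.Icc (0:ℝ) 1 := hz
    have ht : p + (1 - 2*p) * z.re ∈ Set.Icc (0:ℝ) 1 := by
      constructor <;> nlinarith [hz'.1, hz'.2]
    have : (norm ∘ f) z = ‖F ((p + (1 - 2*p) * z.re : ℝ) : ℂ)‖ := by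
      show ‖F ((p : ℂ) + ((1 - 2*p : ℝ) : ℂ) * z)‖ = _
      rw [hFre ((p : ℂ) + ((1 - 2*p : ℝ) : ℂ) * z), hre z]
    rw [this]
    exact hbound _ ht
  -- boundary estimates
  have ha : ∀ z ∈ Complex.re ⁻¹' {0},
      ‖f z‖ ≤ N (cfc (fun x : ℝ => x ^ p) A * X * cfc (fun x : ℝ => x ^ (1 - p)) B) := by
    intro z hz
    have hz0 : z.re = 0 := hz
    refine le_of_eq ?_
    show ‖F ((p : ℂ) + ((1 - 2*p : ℝ) : ℂ) * z)‖ = _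
    rw [hline, hre z, hz0]
    rw [show p + (1 - 2*p) * 0 = p by ring]
    rw [show (1 : ℝ) - p = 1 - p from rfl]
    rw [Stmt5Aux.pwA_real hA p, Stmt5Aux.pwA_real hB (1 - p)]
  have hb : ∀ z ∈ Complex.re ⁻¹' {1},
      ‖f z‖ ≤ N (cfc (fun x : ℝ => x ^ (1 - p)) A * X * cfc (fun x : ℝ => x ^ p) B) := by
    intro z hz
    have hz1 : z.re = 1 := hz
    refine le_of_eq ?_
    show ‖F ((p : ℂ) + ((1 - 2*p : ℝ) : ℂ) * z)‖ = _
    rw [hline, hre z, hz1]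
    rw [show p + (1 - 2*p) * 1 = 1 - p by ring]
    rw [show (1 : ℝ) - (1 - p) = p by ring]
    rw [Stmt5Aux.pwA_real hA (1 - p), Stmt5Aux.pwA_real hB p]
  -- apply Hadamard's three-lines theorem
  have hmem : (((1:ℝ)/2 : ℝ) : ℂ) ∈ verticalClosedStrip 0 1 := by
    simp only [verticalClosedStrip, Set.mem_preimage, Complex.ofReal_re, Set.mem_Icc]
    constructor <;> norm_num
  have H := norm_le_interp_of_mem_verticalClosedStrip₀₁' f hmem hd hBdd ha hb
  rw [Complex.ofReal_re] at H
  -- identify the midpoint value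
  have hmid : f (((1:ℝ)/2 : ℝ) : ℂ)
      = cfc (fun x : ℝ => x ^ ((1 : ℝ) / 2)) A * X * cfc (fun x : ℝ => x ^ ((1 : ℝ) / 2)) B := by
    show F ((p : ℂ) + ((1 - 2*p : ℝ) : ℂ) * (((1:ℝ)/2 : ℝ) : ℂ)) = _
    rw [show ((p : ℂ) + ((1 - 2*p : ℝ) : ℂ) * (((1:ℝ)/2 : ℝ) : ℂ)) = (((1:ℝ)/2 : ℝ) : ℂ) by
      push_cast; ring]
    show Stmt5Aux.pwA hA (((1:ℝ)/2 : ℝ) : ℂ) * X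
        * Stmt5Aux.pwA hB (1 - (((1:ℝ)/2 : ℝ) : ℂ)) = _
    rw [show (1 : ℂ) - (((1:ℝ)/2 : ℝ) : ℂ) = (((1:ℝ)/2 : ℝ) : ℂ) by push_cast; norm_num]
    rw [Stmt5Aux.pwA_real hA ((1:ℝ)/2), Stmt5Aux.pwA_real hB ((1:ℝ)/2)]
  rw [hnorm, hmid] at H
  set a := N (cfc (fun x : ℝ => x ^ p) A * X * cfc (fun x : ℝ => x ^ (1 - p)) B) with haa
  set b := N (cfc (fun x : ℝ => x ^ (1 - p)) A * X * cfc (fun x : ℝ => x ^ p) B) with hbb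
  have ha0 : 0 ≤ a := by rw [haa, ← hnorm]; exact norm_nonneg _
  have hb0 : 0 ≤ b := by rw [hbb, ← hnorm]; exact norm_nonneg _
  have hN0 : 0 ≤ N (cfc (fun x : ℝ => x ^ ((1 : ℝ) / 2)) A * X
      * cfc (fun x : ℝ => x ^ ((1 : ℝ) / 2)) B) := by
    rw [← hnorm]; exact norm_nonneg _
  have hsq : ∀ x : ℝ, 0 ≤ x → (x ^ ((1 - (1:ℝ)/2 : ℝ))) * (x ^ ((1:ℝ)/2 : ℝ)) = x := by
    intro x hx
    rw [← Real.rpow_add' hx (by norm_num)]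
    norm_num
  calc N (cfc (fun x : ℝ => x ^ ((1 : ℝ) / 2)) A * X
        * cfc (fun x : ℝ => x ^ ((1 : ℝ) / 2)) B) ^ 2
      ≤ (a ^ ((1 - (1:ℝ)/2 : ℝ)) * b ^ (((1:ℝ)/2 : ℝ))) ^ 2 := by
        apply pow_le_pow_left₀ hN0 H
    _ = ((a ^ ((1 - (1:ℝ)/2 : ℝ))) * (a ^ ((1:ℝ)/2 : ℝ))) *
        ((b ^ ((1 - (1:ℝ)/2 : ℝ))) * (b ^ ((1:ℝ)/2 : ℝ))) := by
        have h12 : (1 - (1:ℝ)/2 : ℝ) = ((1:ℝ)/2 : ℝ) := by norm_num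
        rw [h12]; ring
    _ = a * b := by rw [hsq a ha0, hsq b hb0]
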